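/- Let C, B > 0 and δ > 0 be such that h_− := (B − √(B² − 4Cδ))/2 is well-defined and lies in (0,1). Let h : [0,∞) → [0,∞) be continuous, differentiable, with h(0) < h_−, and suppose h'(τ) ≤ Cδ − B h(τ) + h(τ)⁵ for all τ > 0. Then h(τ) ∈ [0, h_−] for all τ ≥ 0. -/
import Mathlib


open Set

theorem ode_barrier_lemma
    (C B δ : ℝ) (hC : 0 < C) (hB : 0 < B) (hδ : 0 < δ)
    (hdisc : 0 ≤ B ^ 2 - 4 * C * δ)
    (hm : ℝ) (hhm : hm = (B - Real.sqrt (B ^ 2 - 4 * C * δ)) / 2)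
    (hm_mem : hm ∈ Ioo (0 : ℝ) 1)
    (h : ℝ → ℝ)
    (hcont : ContinuousOn h (Ici (0 : ℝ)))
    (hdiff : ∀ τ : ℝ, 0 < τ → DifferentiableAt ℝ h τ)
    (hnn : ∀ τ : ℝ, 0 ≤ τ → 0 ≤ h τ)
    (h0 : h 0 < hm)
    (hineq : ∀ τ : ℝ, 0 < τ → deriv h τ ≤ C * δ - B * h τ + h τ ^ 5) :
    ∀ τ : ℝ, 0 ≤ τ → h τ ∈ Icc (0 : ℝ) hm := by
  intro τ hτ
  refine ⟨hnn τ hτ, ?_⟩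
  by_contra hlt
  push_neg at hlt
  have hsq : Real.sqrt (B ^ 2 - 4 * C * δ) ^ 2 = B ^ 2 - 4 * C * δ :=
    Real.sq_sqrt hdisc
  have hroot : hm ^ 2 - B * hm + C * δ = 0 := by
    rw [hhm]; nlinarith [hsq]
  obtain ⟨hm0, hm1⟩ := hm_mem
  have hF : C * δ - B * hm + hm ^ 5 < 0 := by
    nlinarith [pow_pos hm0 2, pow_pos hm0 5, pow_lt_one₀ (le_of_lt hm0) hm1 (by norm_num : (3:ℕ) ≠ 0)]
  have hτpos : 0 < τ := by
    rcases hτ.lt_or_eq with h' | h'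
    · exact h'
    · exfalso; rw [← h'] at hlt; linarith
  set S : Set ℝ := Icc 0 τ ∩ h ⁻¹' (Iic hm) with hS
  have hSne : (0:ℝ) ∈ S := ⟨⟨le_refl 0, hτpos.le⟩, h0.le⟩
  have hSclosed : IsClosed S :=
    (hcont.mono (Icc_subset_Ici_self)).preimage_isClosed_of_isClosed isClosed_Icc isClosed_Iic
  have hSbdd : BddAbove S := ⟨τ, fun x hx => hx.1.2⟩
  set s := sSup S with hs
  have hsmem : s ∈ S := hSclosed.csSup_mem ⟨0, hSne⟩ hSbdd
  have hs0 : 0 ≤ s := hsmem.1.1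
  have hsle : h s ≤ hm := hsmem.2
  have hslt : s < τ := by
    rcases hsmem.1.2.lt_or_eq with h' | h'
    · exact h'
    · exfalso; rw [h'] at hsle; linarith
  have habove : ∀ t, s < t → t ≤ τ → hm < h t := by
    intro t hst htτ
    by_contra hle; push_neg at hle
    have : t ∈ S := ⟨⟨le_trans hs0 hst.le, htτ⟩, hle⟩
    exact absurd (le_csSup hSbdd this) (not_le.2 hst)
  have hcwa : Filter.Tendsto h (nhdsWithin s (Ioi s)) (nhds (h s)) := by
    have := (hcont s (mem_Ici.2 hs0)).tendsto
    exact this.mono_left (nhdsWithin_mono s (fun t ht => le_trans hs0 (le_of_lt ht)))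
  have hge : hm ≤ h s := by
    refine ge_of_tendsto hcwa ?_
    filter_upwards [Ioo_mem_nhdsGT_of_mem ⟨le_refl s, hslt⟩] with t ht
    exact (habove t ht.1 ht.2.le).le
  have hseq : h s = hm := le_antisymm hsle hge
  have hspos : 0 < s := by
    rcases hs0.lt_or_eq with h' | h'
    · exact h'
    · exfalso; rw [← h'] at hseq; linarith
  have hd : HasDerivAt h (deriv h s) s := (hdiff s hspos).hasDerivAt
  have hslope : Filter.Tendsto (slope h s) (nhdsWithin s (Ioi s)) (nhds (deriv h s)) :=
    (hasDerivAt_iff_tendsto_slope.1 hd).mono_left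
      (nhdsWithin_mono s (fun t ht => ne_of_gt ht))
  have hdge : 0 ≤ deriv h s := by
    refine ge_of_tendsto hslope ?_
    filter_upwards [Ioo_mem_nhdsGT_of_mem ⟨le_refl s, hslt⟩] with t ht
    have h1 : hm < h t := habove t ht.1 ht.2.le
    have h2 : 0 < t - s := sub_pos.2 ht.1
    rw [slope_def_field]
    apply div_nonneg _ h2.le
    rw [hseq]; linarith
  have hdle := hineq s hspos
  rw [hseq] at hdle
  linarith
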